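/- The formal power series identity Σ_{n≥1} spt(n)q^n = (Π_{n≥1} 1/(1−q^n)) · Σ_{n≥1} (q^n Π_{m=1}^{n−1}(1−q^m))/(1−q^n) holds in ℤ[[q]], and its first coefficients are q + 3q² + 5q³ + 10q⁴ + 14q⁵ + ⋯. -/

import Mathlib

open Finset PowerSeries

/-- Andrews' smallest-parts function: total number of occurrences of the smallest part
over all partitions of `n`. -/
def spt (n : ℕ) : ℕ :=
  ∑ p : n.Partition, (p.parts.filter (fun x => ∀ y ∈ p.parts, x ≤ y)).card

/-- The geometric series `1/(1 - q^n) = Σ_{k ≥ 0} q^{kn}` in `ℤ[[q]]`. -/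
noncomputable def geomInv (n : ℕ) : PowerSeries ℤ :=
  PowerSeries.mk fun m => if n ∣ m then 1 else 0



lemma geomInv_inv {n : ℕ} (hn : 1 ≤ n) : (1 - (X : PowerSeries ℤ) ^ n) * geomInv n = 1 := by
  ext d
  rw [sub_mul, one_mul, map_sub]
  rcases le_or_gt n d with h | h
  · obtain ⟨e, rfl⟩ := Nat.exists_eq_add_of_le h
    rw [add_comm n e, coeff_X_pow_mul]
    simp only [geomInv, coeff_mk]
    have hd : n ∣ e + n ↔ n ∣ e := Nat.dvd_add_self_right
    have hne : e + n ≠ 0 := by omega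
    rw [if_congr hd rfl rfl]
    simp [PowerSeries.coeff_one, hne]; omega
  · have h0 : (coeff d) (X ^ n * geomInv n) = 0 := by
      rw [PowerSeries.coeff_X_pow_mul']
      simp [Nat.not_le_of_lt h]
    rw [h0, sub_zero]
    simp only [geomInv, coeff_mk, PowerSeries.coeff_one]
    rcases Nat.eq_zero_or_pos d with rfl | hd
    · simp
    · have : ¬ n ∣ d := fun hdvd => absurd (Nat.le_of_dvd hd hdvd) (Nat.not_le_of_lt h)
      simp [this]; omega

-- algebraic rearrangement
lemma rhs_eq (N : ℕ) :
    ((∏ n ∈ Finset.Icc 1 N, geomInv n) *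
      ∑ n ∈ Finset.Icc 1 N,
        (X : PowerSeries ℤ) ^ n *
          (∏ m ∈ Finset.Icc 1 (n - 1), (1 - (X : PowerSeries ℤ) ^ m)) * geomInv n)
    = ∑ n ∈ Finset.Icc 1 N,
        (X : PowerSeries ℤ) ^ n * (geomInv n * ∏ m ∈ Finset.Ioc (n-1) N, geomInv m) := by
  rw [Finset.mul_sum]
  refine Finset.sum_congr rfl fun n hn => ?_
  simp only [Finset.mem_Icc] at hn
  obtain ⟨h1, h2⟩ := hn
  have e1 : Finset.Icc 1 N = Finset.Ioc 0 N := Finset.Icc_add_one_left_eq_Ioc 0 N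
  have e2 : Finset.Icc 1 (n-1) = Finset.Ioc 0 (n-1) := Finset.Icc_add_one_left_eq_Ioc 0 (n-1)
  have split : (∏ m ∈ Finset.Ioc 0 (n-1), geomInv m) * (∏ m ∈ Finset.Ioc (n-1) N, geomInv m)
      = ∏ m ∈ Finset.Icc 1 N, geomInv m := by
    rw [e1]; exact Finset.prod_Ioc_consecutive _ (Nat.zero_le _) (by omega)
  rw [e2, ← split]
  have key : (∏ m ∈ Finset.Ioc 0 (n-1), geomInv m) * (∏ m ∈ Finset.Ioc 0 (n-1), (1 - (X : PowerSeries ℤ) ^ m)) = 1 := by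
    rw [← Finset.prod_mul_distrib]
    refine Finset.prod_eq_one fun m hm => ?_
    rw [Finset.mem_Ioc] at hm
    rw [mul_comm]; exact geomInv_inv hm.1
  calc (∏ m ∈ Finset.Ioc 0 (n-1), geomInv m) * (∏ m ∈ Finset.Ioc (n-1) N, geomInv m) *
        ((X : PowerSeries ℤ)^n * (∏ m ∈ Finset.Ioc 0 (n-1), (1 - (X : PowerSeries ℤ)^m)) * geomInv n)
      = ((∏ m ∈ Finset.Ioc 0 (n-1), geomInv m) * (∏ m ∈ Finset.Ioc 0 (n-1), (1 - (X : PowerSeries ℤ)^m))) *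
        ((X : PowerSeries ℤ)^n * (geomInv n * ∏ m ∈ Finset.Ioc (n-1) N, geomInv m)) := by ring
    _ = _ := by rw [key, one_mul]



def Dset (N n b : ℕ) : Finset (ℕ →₀ ℕ) :=
  ((Finset.Ioc (n-1) N).finsuppAntidiag b).filter
    (fun l => ∀ i ∈ Finset.Ioc (n-1) N, i ∣ l i)

lemma coeff_P (N n b : ℕ) :
    coeff b (∏ m ∈ Finset.Ioc (n-1) N, geomInv m) = ((Dset N n b).card : ℤ) := by
  rw [PowerSeries.coeff_prod]
  have : ∀ l ∈ (Finset.Ioc (n-1) N).finsuppAntidiag b,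
      (∏ i ∈ Finset.Ioc (n-1) N, (coeff (l i)) (geomInv i))
        = if (∀ i ∈ Finset.Ioc (n-1) N, i ∣ l i) then (1:ℤ) else 0 := by
    intro l _
    rw [← Finset.prod_boole]
    exact Finset.prod_congr rfl fun i _ => by simp [geomInv, coeff_mk]
  rw [Finset.sum_congr rfl this, Finset.sum_boole]
  rfl

lemma coeff_term {N n : ℕ} (h1 : 1 ≤ n) (h2 : n ≤ N) :
    coeff N ((X : PowerSeries ℤ)^n * (geomInv n * ∏ m ∈ Finset.Ioc (n-1) N, geomInv m))
      = ((∑ ab ∈ Finset.HasAntidiagonal.antidiagonal (N - n),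
          if n ∣ ab.1 then (Dset N n ab.2).card else 0 : ℕ) : ℤ) := by
  obtain ⟨M, rfl⟩ : ∃ M, N = M + n := ⟨N - n, by omega⟩
  rw [coeff_X_pow_mul, PowerSeries.coeff_mul, Nat.add_sub_cancel]
  push_cast
  refine Finset.sum_congr rfl fun ab hab => ?_
  rw [coeff_P]
  simp only [geomInv, coeff_mk]
  split <;> simp



lemma sum_repl_eq (r : Multiset ℕ) {s : Finset ℕ} (hs : r.toFinset ⊆ s) :
    ∑ i ∈ s, Multiset.replicate (r.count i) i = r := by
  have hz : ∀ x ∈ s, x ∉ r.toFinset → Multiset.replicate (r.count x) x = 0 := by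
    intro x _ hx
    rw [Multiset.count_eq_zero_of_notMem (fun h => hx (Multiset.mem_toFinset.2 h))]
    rfl
  rw [← Finset.sum_subset hs hz]
  simp only [← Multiset.nsmul_singleton]
  exact Multiset.toFinset_sum_count_nsmul_eq r

lemma sum_weight (r : Multiset ℕ) {s : Finset ℕ} (hs : r.toFinset ⊆ s) :
    ∑ i ∈ s, i * r.count i = r.sum := by
  calc ∑ i ∈ s, i * r.count i = ∑ i ∈ s, (Multiset.replicate (r.count i) i).sum := by
        refine Finset.sum_congr rfl fun i _ => ?_
        rw [Multiset.sum_replicate, smul_eq_mul, mul_comm]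
    _ = (∑ i ∈ s, Multiset.replicate (r.count i) i).sum := (Multiset.sum_sum _ _).symm
    _ = r.sum := by rw [sum_repl_eq r hs]

noncomputable def wt (r : Multiset ℕ) : ℕ →₀ ℕ :=
  Finsupp.onFinset r.toFinset (fun i => i * r.count i)
    (fun i h => Multiset.mem_toFinset.2 (Multiset.count_pos.1
      (Nat.pos_of_ne_zero fun hc => h (by simp [hc]))))

lemma wt_support (r : Multiset ℕ) : (wt r).support ⊆ r.toFinset := by
  unfold wt; exact Finsupp.support_onFinset_subset

@[simp] lemma wt_apply (r : Multiset ℕ) (i : ℕ) : wt r i = i * r.count i := rfl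

def unwt (N n : ℕ) (l : ℕ →₀ ℕ) : Multiset ℕ :=
  ∑ i ∈ Finset.Ioc (n-1) N, Multiset.replicate (l i / i) i

lemma count_unwt (N n : ℕ) (l : ℕ →₀ ℕ) (i : ℕ) :
    (unwt N n l).count i = if i ∈ Finset.Ioc (n-1) N then l i / i else 0 := by
  rw [unwt, Multiset.count_sum']
  simp [Multiset.count_replicate, Finset.sum_ite_eq]

lemma mem_unwt {N n x : ℕ} {l : ℕ →₀ ℕ} (hx : x ∈ unwt N n l) : x ∈ Finset.Ioc (n-1) N := by
  rw [unwt, Multiset.mem_sum] at hx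
  obtain ⟨i, hi, hxi⟩ := hx
  rwa [(Multiset.eq_of_mem_replicate hxi : x = i)]

lemma unwt_sum {N n b : ℕ} {l : ℕ →₀ ℕ} (hl : ∑ i ∈ Finset.Ioc (n-1) N, l i = b)
    (hdl : ∀ i ∈ Finset.Ioc (n-1) N, i ∣ l i) : (unwt N n l).sum = b := by
  rw [unwt, Multiset.sum_sum, ← hl]
  refine Finset.sum_congr rfl fun i hi => ?_
  rw [Multiset.sum_replicate, smul_eq_mul, Nat.div_mul_cancel (hdl i hi)]

lemma mk_pos {N n : ℕ} (h1 : 1 ≤ n) {k : ℕ} {l : ℕ →₀ ℕ} :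
    ∀ {x : ℕ}, x ∈ Multiset.replicate (k + 1) n + unwt N n l → 0 < x := by
  intro x hx
  rw [Multiset.mem_add] at hx
  rcases hx with hx | hx
  · rw [Multiset.eq_of_mem_replicate hx]; omega
  · have := Finset.mem_Ioc.1 (mem_unwt hx); omega

lemma mk_sum {N n a b : ℕ} {l : ℕ →₀ ℕ} (h2 : n ≤ N) (hab : a + b = N - n) (hdvd : n ∣ a)
    (hl : ∑ i ∈ Finset.Ioc (n-1) N, l i = b)
    (hdl : ∀ i ∈ Finset.Ioc (n-1) N, i ∣ l i) :
    (Multiset.replicate (a / n + 1) n + unwt N n l).sum = N := by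
  rw [Multiset.sum_add, Multiset.sum_replicate, smul_eq_mul, unwt_sum hl hdl,
    add_mul, one_mul, Nat.div_mul_cancel hdvd]
  omega

lemma card_eq (N n : ℕ) (h1 : 1 ≤ n) (h2 : n ≤ N) :
    ((Finset.univ.filter (fun p : N.Partition => n ∈ p.parts ∧ ∀ x ∈ p.parts, n ≤ x)).sigma
      (fun p => Finset.range (p.parts.count n))).card
    = (((Finset.HasAntidiagonal.antidiagonal (N - n)).filter (fun ab => n ∣ ab.1)).sigma
      (fun ab => Dset N n ab.2)).card := by
  refine Finset.card_bij'
    (fun pk _ => ⟨(pk.2 * n, N - (pk.2 + 1) * n),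
        wt (pk.1.parts - Multiset.replicate (pk.2 + 1) n)⟩)
    (fun al ha => ⟨⟨Multiset.replicate (al.1.1 / n + 1) n + unwt N n al.2,
        @mk_pos N n h1 _ _, by
          rw [Finset.mem_sigma, Finset.mem_filter, Finset.HasAntidiagonal.mem_antidiagonal] at ha
          obtain ⟨⟨hab, hdvd⟩, hD⟩ := ha
          rw [Dset, Finset.mem_filter, Finset.mem_finsuppAntidiag] at hD
          exact mk_sum h2 hab hdvd hD.1.1 hD.2⟩,
      al.1.1 / n⟩)
    ?_ ?_ ?_ ?_
  · -- hi : forward image in target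
    rintro ⟨p, k⟩ hpk
    rw [Finset.mem_sigma, Finset.mem_filter, Finset.mem_range] at hpk
    dsimp only at hpk ⊢
    obtain ⟨⟨-, hmem, hmin⟩, hk⟩ := hpk
    have hrep : Multiset.replicate (k + 1) n ≤ p.parts :=
      Multiset.le_count_iff_replicate_le.1 (by omega)
    set r := p.parts - Multiset.replicate (k + 1) n with hr
    have hr_add : r + Multiset.replicate (k + 1) n = p.parts := tsub_add_cancel_of_le hrep
    have hrsum : r.sum + (k + 1) * n = N := by
      have h := congrArg Multiset.sum hr_add
      rw [Multiset.sum_add, Multiset.sum_replicate, smul_eq_mul] at h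
      rw [h, p.parts_sum]
    have hrFin : r.toFinset ⊆ Finset.Ioc (n - 1) N := by
      intro x hx
      rw [Multiset.mem_toFinset] at hx
      have hxp : x ∈ p.parts := Multiset.mem_of_le tsub_le_self hx
      have hxN : x ≤ N := by
        have := Multiset.single_le_sum (fun y _ => Nat.zero_le y) x hxp
        rwa [p.parts_sum] at this
      exact Finset.mem_Ioc.2 ⟨by have := hmin x hxp; omega, hxN⟩
    have e1 : (k + 1) * n = k * n + n := by ring
    rw [e1] at hrsum
    rw [Finset.mem_sigma, Finset.mem_filter, Finset.HasAntidiagonal.mem_antidiagonal]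
    refine ⟨⟨by dsimp only; rw [e1]; omega, dvd_mul_left n k⟩, ?_⟩
    rw [Dset, Finset.mem_filter, Finset.mem_finsuppAntidiag]
    refine ⟨⟨?_, ?_⟩, fun i _ => ⟨r.count i, rfl⟩⟩
    · show ∑ i ∈ Finset.Ioc (n - 1) N, i * r.count i = N - (k + 1) * n
      rw [sum_weight r hrFin, e1]; omega
    · exact (wt_support r).trans hrFin
  · -- hj : backward image in source
    rintro ⟨⟨a, b⟩, l⟩ ha
    rw [Finset.mem_sigma, Finset.mem_filter, Finset.HasAntidiagonal.mem_antidiagonal] at ha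
    dsimp only at ha ⊢
    obtain ⟨⟨hab, hdvd⟩, hD⟩ := ha
    rw [Finset.mem_sigma, Finset.mem_filter, Finset.mem_range]
    refine ⟨⟨Finset.mem_univ _, ?_, ?_⟩, ?_⟩
    · exact Multiset.mem_add.2 (Or.inl (Multiset.mem_replicate.2 ⟨Nat.succ_ne_zero _, rfl⟩))
    · intro x hx
      rcases Multiset.mem_add.1 hx with hx | hx
      · rw [Multiset.eq_of_mem_replicate hx]
      · have := Finset.mem_Ioc.1 (mem_unwt hx); omega
    · show a / n < Multiset.count n (Multiset.replicate (a / n + 1) n + unwt N n l)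
      rw [Multiset.count_add, Multiset.count_replicate, if_pos rfl]
      exact Nat.lt_add_right _ (Nat.lt_succ_self _)
  · -- left inverse
    rintro ⟨p, k⟩ hpk
    rw [Finset.mem_sigma, Finset.mem_filter, Finset.mem_range] at hpk
    dsimp only at hpk ⊢
    obtain ⟨⟨-, hmem, hmin⟩, hk⟩ := hpk
    have hrep : Multiset.replicate (k + 1) n ≤ p.parts :=
      Multiset.le_count_iff_replicate_le.1 (by omega)
    set r := p.parts - Multiset.replicate (k + 1) n with hr
    have hr_add : r + Multiset.replicate (k + 1) n = p.parts := tsub_add_cancel_of_le hrep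
    have hrFin : r.toFinset ⊆ Finset.Ioc (n - 1) N := by
      intro x hx
      rw [Multiset.mem_toFinset] at hx
      have hxp : x ∈ p.parts := Multiset.mem_of_le tsub_le_self hx
      have hxN : x ≤ N := by
        have := Multiset.single_le_sum (fun y _ => Nat.zero_le y) x hxp
        rwa [p.parts_sum] at this
      exact Finset.mem_Ioc.2 ⟨by have := hmin x hxp; omega, hxN⟩
    have hk' : k * n / n = k := Nat.mul_div_cancel k (by omega)
    have hunwt : unwt N n (wt r) = r := by
      rw [unwt]
      refine Eq.trans (Finset.sum_congr rfl fun i hi => ?_) (sum_repl_eq r hrFin)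
      have hi1 : 0 < i := by have := Finset.mem_Ioc.1 hi; omega
      rw [wt_apply, Nat.mul_div_cancel_left _ hi1]
    have hparts : Multiset.replicate (k * n / n + 1) n + unwt N n (wt r) = p.parts := by
      rw [hk', hunwt, add_comm, hr_add]
    exact Sigma.ext (Nat.Partition.ext hparts) (heq_of_eq hk')
  · -- right inverse
    rintro ⟨⟨a, b⟩, l⟩ ha
    rw [Finset.mem_sigma, Finset.mem_filter, Finset.HasAntidiagonal.mem_antidiagonal] at ha
    dsimp only at ha ⊢
    obtain ⟨⟨hab, hdvd⟩, hD⟩ := ha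
    rw [Dset, Finset.mem_filter, Finset.mem_finsuppAntidiag] at hD
    obtain ⟨⟨hl, hsupp⟩, hdl⟩ := hD
    have hk : a / n * n = a := Nat.div_mul_cancel hdvd
    have hsub : Multiset.replicate (a / n + 1) n + unwt N n l
        - Multiset.replicate (a / n + 1) n = unwt N n l := by
      rw [add_tsub_cancel_left]
    have hwt : wt (unwt N n l) = l := by
      ext i
      rw [wt_apply, count_unwt]
      split
      · next hi => rw [Nat.mul_div_cancel' (hdl i hi)]
      · next hi =>
        rw [mul_zero]
        exact (Finsupp.notMem_support_iff.1 (fun hc => hi (hsupp hc))).symm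
    have hn' : (a / n + 1) * n = a + n := by rw [add_mul, one_mul, hk]
    refine Sigma.ext ?_ (heq_of_eq ?_)
    · show (a / n * n, N - (a / n + 1) * n) = (a, b)
      rw [hk, hn', show N - (a + n) = b by omega]
    · show wt (Multiset.replicate (a / n + 1) n + unwt N n l
          - Multiset.replicate (a / n + 1) n) = l
      rw [hsub, hwt]



lemma spt_decomp (N : ℕ) (hN : 1 ≤ N) :
    spt N = ∑ n ∈ Finset.Icc 1 N, ∑ p : N.Partition,
      (if n ∈ p.parts ∧ ∀ x ∈ p.parts, n ≤ x then p.parts.count n else 0) := by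
  rw [Finset.sum_comm]
  refine Finset.sum_congr rfl fun p _ => ?_
  have hne : p.parts ≠ 0 := by
    intro h
    have := p.parts_sum
    rw [h] at this
    simp at this
    omega
  have htne : p.parts.toFinset.Nonempty := by
    obtain ⟨x, hx⟩ := Multiset.exists_mem_of_ne_zero hne
    exact ⟨x, Multiset.mem_toFinset.2 hx⟩
  set n₀ := p.parts.toFinset.min' htne with hn₀
  have hmem0 : n₀ ∈ p.parts := Multiset.mem_toFinset.1 (p.parts.toFinset.min'_mem htne)
  have hmin : ∀ x ∈ p.parts, n₀ ≤ x := fun x hx =>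
    Finset.min'_le _ x (Multiset.mem_toFinset.2 hx)
  have h0mem : n₀ ∈ Finset.Icc 1 N := by
    rw [Finset.mem_Icc]
    constructor
    · exact p.parts_pos hmem0
    · have := Multiset.single_le_sum (fun y _ => Nat.zero_le y) n₀ hmem0
      rwa [p.parts_sum] at this
  rw [Finset.sum_eq_single_of_mem n₀ h0mem]
  · rw [if_pos ⟨hmem0, hmin⟩]
    have hfeq : p.parts.filter (fun x => ∀ y ∈ p.parts, x ≤ y)
        = p.parts.filter (fun x => x = n₀) := by
      refine Multiset.filter_congr fun x hx => ?_
      constructor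
      · intro h; exact le_antisymm (h n₀ hmem0) (hmin x hx)
      · rintro rfl; exact hmin
    rw [hfeq, Multiset.filter_eq', Multiset.card_replicate]
  · intro b _ hbne
    rw [if_neg]
    rintro ⟨hb1, hb2⟩
    exact hbne (le_antisymm (hb2 n₀ hmem0) (hmin b hb1))

lemma left_card (N n : ℕ) :
    (∑ p : N.Partition, if n ∈ p.parts ∧ ∀ x ∈ p.parts, n ≤ x then p.parts.count n else 0)
    = ((Finset.univ.filter (fun p : N.Partition => n ∈ p.parts ∧ ∀ x ∈ p.parts, n ≤ x)).sigma
      (fun p => Finset.range (p.parts.count n))).card := by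
  rw [Finset.card_sigma, ← Finset.sum_filter]
  exact Finset.sum_congr rfl fun p _ => (Finset.card_range _).symm

lemma right_card (N n b' : ℕ) (D : ℕ → ℕ → Finset (ℕ →₀ ℕ)) :
    (∑ ab ∈ Finset.HasAntidiagonal.antidiagonal b', if n ∣ ab.1 then (D n ab.2).card else 0)
    = (((Finset.HasAntidiagonal.antidiagonal b').filter (fun ab => n ∣ ab.1)).sigma
      (fun ab => D n ab.2)).card := by
  rw [Finset.card_sigma, ← Finset.sum_filter]



lemma spt_eq_sum (n : ℕ) (M : Finset (Multiset ℕ))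
    (h1 : ∀ m ∈ M, m.sum = n) (h2 : ∀ m ∈ M, ∀ x ∈ m, 0 < x)
    (h3 : ∀ p : n.Partition, p.parts ∈ M) :
    spt n = ∑ m ∈ M, (m.filter (fun x => ∀ y ∈ m, x ≤ y)).card := by
  unfold spt
  refine Finset.sum_bij' (fun p _ => p.parts)
    (fun m hm => ⟨m, fun {x} hx => h2 m hm x hx, h1 m hm⟩)
    (fun p _ => h3 p) (fun m hm => Finset.mem_univ _)
    (fun p _ => Nat.Partition.ext rfl) (fun m hm => rfl) (fun p _ => rfl)

def L1' : Finset (Multiset ℕ) := {{1}}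
def L2' : Finset (Multiset ℕ) := {{2}, {1,1}}
def L3' : Finset (Multiset ℕ) := {{3}, {2,1}, {1,1,1}}
def L4' : Finset (Multiset ℕ) := {{4}, {3,1}, {2,2}, {2,1,1}, {1,1,1,1}}
def L5' : Finset (Multiset ℕ) :=
  {{5}, {4,1}, {3,2}, {3,1,1}, {2,2,1}, {2,1,1,1}, {1,1,1,1,1}}

lemma cls0 : ∀ m : Multiset ℕ, (∀ x ∈ m, 0 < x) → m.sum = 0 → m = 0 := by
  intro m hpos hsum
  by_contra h
  obtain ⟨x, hx⟩ := Multiset.exists_mem_of_ne_zero h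
  have h1 := hpos x hx
  have h2 : x ≤ m.sum := Multiset.single_le_sum (fun y _ => Nat.zero_le y) x hx
  omega

lemma cls1 : ∀ m : Multiset ℕ, (∀ x ∈ m, 0 < x) → m.sum = 1 → m ∈ L1' := by
  intro m
  induction m using Multiset.induction_on with
  | empty => intro _ h; simp at h
  | cons a s ih =>
    intro hpos hsum
    rw [Multiset.sum_cons] at hsum
    have ha : 0 < a := hpos a (Multiset.mem_cons_self a s)
    have ha2 : a ≤ 1 := by omega
    have hspos : ∀ x ∈ s, 0 < x := fun x hx => hpos x (Multiset.mem_cons_of_mem hx)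
    interval_cases a
    · rw [cls0 s hspos (by omega)]; decide

lemma cls2 : ∀ m : Multiset ℕ, (∀ x ∈ m, 0 < x) → m.sum = 2 → m ∈ L2' := by
  intro m
  induction m using Multiset.induction_on with
  | empty => intro _ h; simp at h
  | cons a s ih =>
    intro hpos hsum
    rw [Multiset.sum_cons] at hsum
    have ha : 0 < a := hpos a (Multiset.mem_cons_self a s)
    have ha2 : a ≤ 2 := by omega
    have hspos : ∀ x ∈ s, 0 < x := fun x hx => hpos x (Multiset.mem_cons_of_mem hx)
    interval_cases a
    · have hs := cls1 s hspos (by omega); fin_cases hs <;> decide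
    · rw [cls0 s hspos (by omega)]; decide

lemma cls3 : ∀ m : Multiset ℕ, (∀ x ∈ m, 0 < x) → m.sum = 3 → m ∈ L3' := by
  intro m
  induction m using Multiset.induction_on with
  | empty => intro _ h; simp at h
  | cons a s ih =>
    intro hpos hsum
    rw [Multiset.sum_cons] at hsum
    have ha : 0 < a := hpos a (Multiset.mem_cons_self a s)
    have ha2 : a ≤ 3 := by omega
    have hspos : ∀ x ∈ s, 0 < x := fun x hx => hpos x (Multiset.mem_cons_of_mem hx)
    interval_cases a
    · have hs := cls2 s hspos (by omega); fin_cases hs <;> decide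
    · have hs := cls1 s hspos (by omega); fin_cases hs <;> decide
    · rw [cls0 s hspos (by omega)]; decide

lemma cls4 : ∀ m : Multiset ℕ, (∀ x ∈ m, 0 < x) → m.sum = 4 → m ∈ L4' := by
  intro m
  induction m using Multiset.induction_on with
  | empty => intro _ h; simp at h
  | cons a s ih =>
    intro hpos hsum
    rw [Multiset.sum_cons] at hsum
    have ha : 0 < a := hpos a (Multiset.mem_cons_self a s)
    have ha2 : a ≤ 4 := by omega
    have hspos : ∀ x ∈ s, 0 < x := fun x hx => hpos x (Multiset.mem_cons_of_mem hx)
    interval_cases a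
    · have hs := cls3 s hspos (by omega); fin_cases hs <;> decide
    · have hs := cls2 s hspos (by omega); fin_cases hs <;> decide
    · have hs := cls1 s hspos (by omega); fin_cases hs <;> decide
    · rw [cls0 s hspos (by omega)]; decide

lemma cls5 : ∀ m : Multiset ℕ, (∀ x ∈ m, 0 < x) → m.sum = 5 → m ∈ L5' := by
  intro m
  induction m using Multiset.induction_on with
  | empty => intro _ h; simp at h
  | cons a s ih =>
    intro hpos hsum
    rw [Multiset.sum_cons] at hsum
    have ha : 0 < a := hpos a (Multiset.mem_cons_self a s)
    have ha2 : a ≤ 5 := by omega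
    have hspos : ∀ x ∈ s, 0 < x := fun x hx => hpos x (Multiset.mem_cons_of_mem hx)
    interval_cases a
    · have hs := cls4 s hspos (by omega); fin_cases hs <;> decide
    · have hs := cls3 s hspos (by omega); fin_cases hs <;> decide
    · have hs := cls2 s hspos (by omega); fin_cases hs <;> decide
    · have hs := cls1 s hspos (by omega); fin_cases hs <;> decide
    · rw [cls0 s hspos (by omega)]; decide

lemma spt1 : spt 1 = 1 := by
  rw [spt_eq_sum 1 L1' (by decide) (by decide) (fun p => cls1 p.parts (fun x hx => p.parts_pos hx) p.parts_sum)]; decide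
lemma spt2 : spt 2 = 3 := by
  rw [spt_eq_sum 2 L2' (by decide) (by decide) (fun p => cls2 p.parts (fun x hx => p.parts_pos hx) p.parts_sum)]; decide
lemma spt3 : spt 3 = 5 := by
  rw [spt_eq_sum 3 L3' (by decide) (by decide) (fun p => cls3 p.parts (fun x hx => p.parts_pos hx) p.parts_sum)]; decide
lemma spt4 : spt 4 = 10 := by
  rw [spt_eq_sum 4 L4' (by decide) (by decide) (fun p => cls4 p.parts (fun x hx => p.parts_pos hx) p.parts_sum)]; decide
lemma spt5 : spt 5 = 14 := by
  rw [spt_eq_sum 5 L5' (by decide) (by decide) (fun p => cls5 p.parts (fun x hx => p.parts_pos hx) p.parts_sum)]; decide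

/-- The identity `Σ_{n≥1} spt(n) qⁿ = (Π_{n≥1} 1/(1-qⁿ)) · Σ_{n≥1} qⁿ Π_{m=1}^{n-1}(1-qᵐ)/(1-qⁿ)`
in `ℤ[[q]]`: `geomInv n` really is `1/(1-qⁿ)`, each coefficient of the left-hand side equals
the corresponding coefficient of the right-hand side (the infinite product and sum truncated
harmlessly at `N`), and the initial coefficients are `q + 3q² + 5q³ + 10q⁴ + 14q⁵ + ⋯`. -/
theorem stmt17 :
    (∀ n : ℕ, 1 ≤ n → (1 - (X : PowerSeries ℤ) ^ n) * geomInv n = 1) ∧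
    (∀ N : ℕ,
      PowerSeries.coeff N (PowerSeries.mk fun n => if n = 0 then 0 else (spt n : ℤ))
        = PowerSeries.coeff N ((∏ n ∈ Finset.Icc 1 N, geomInv n) *
            ∑ n ∈ Finset.Icc 1 N,
              (X : PowerSeries ℤ) ^ n *
                (∏ m ∈ Finset.Icc 1 (n - 1), (1 - (X : PowerSeries ℤ) ^ m)) * geomInv n)) ∧
    spt 1 = 1 ∧ spt 2 = 3 ∧ spt 3 = 5 ∧ spt 4 = 10 ∧ spt 5 = 14 := by
  refine ⟨fun n hn => geomInv_inv hn, fun N => ?_, spt1, spt2, spt3, spt4, spt5⟩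
  rw [coeff_mk]
  rcases Nat.eq_zero_or_pos N with rfl | hN
  · simp
  · rw [if_neg (by omega), rhs_eq N, map_sum]
    have step : ∀ n ∈ Finset.Icc 1 N,
        (coeff N) ((X : PowerSeries ℤ) ^ n *
            (geomInv n * ∏ m ∈ Finset.Ioc (n - 1) N, geomInv m))
          = ((∑ ab ∈ Finset.HasAntidiagonal.antidiagonal (N - n),
              if n ∣ ab.1 then (Dset N n ab.2).card else 0 : ℕ) : ℤ) := fun n hn =>
      coeff_term (Finset.mem_Icc.1 hn).1 (Finset.mem_Icc.1 hn).2
    rw [Finset.sum_congr rfl step, ← Nat.cast_sum]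
    congr 1
    rw [spt_decomp N hN]
    refine Finset.sum_congr rfl fun n hn => ?_
    obtain ⟨h1, h2⟩ := Finset.mem_Icc.1 hn
    rw [left_card, card_eq N n h1 h2, right_card N n (N - n) (Dset N)]
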